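/- arXiv:1308.6526 — 9 statements merged into one kernel-verified Lean document; each statement's English description precedes it below -/
import Mathlib

section
/- Deterministic delivery (Lemma on reliability 1): Let p be a probability profile. If there exist a node i ∈ N and a path x_0 = s, x_1, …, x_n = i such that p_{x_r}[x_{r+1}] = 1 for every r ∈ {0, …, n−1}, then q_i[p] = 0, i.e., φ[∅,{s}|p,{i}] = 0. -/
/-- The probability `φ[R, I | p, L]` that no node of `L` ever gets infected, in the
epidemic dissemination process on the node set `N`, given that `R` is the set of nodes
infected before the last step, `I` the set of nodes infected in the last step, and
`p` the profile of forwarding probabilities. -/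
noncomputable def phi {V : Type*} [Fintype V] [DecidableEq V]
    (N : Finset V) (p : V → V → ℝ) (L : Finset V) (R I : Finset V) : ℝ :=
  if hI : I = ∅ then 1
  else
    ∑ H ∈ (N \ (R ∪ I ∪ L)).powerset.attach,
      (∏ k ∈ H.1, (1 - ∏ l ∈ I, (1 - p l k))) *
        (∏ k ∈ N \ (H.1 ∪ R ∪ I), ∏ l ∈ I, (1 - p l k)) *
        phi N p L (R ∪ I) H.1
termination_by (Finset.univ \ (R ∪ I)).card * 2 + I.card
decreasing_by
  have hHsub : H.1 ⊆ Finset.univ \ (R ∪ I) := by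
    intro x hx
    have hx' := Finset.mem_powerset.mp H.2 hx
    rw [Finset.mem_sdiff] at hx' ⊢
    exact ⟨Finset.mem_univ x, fun hc => hx'.2 (Finset.mem_union_left _ hc)⟩
  have heq : Finset.univ \ (R ∪ I ∪ H.1) = (Finset.univ \ (R ∪ I)) \ H.1 := by
    ext x
    simp only [Finset.mem_sdiff, Finset.mem_union, Finset.mem_univ, true_and]
    tauto
  have hcard : (Finset.univ \ (R ∪ I ∪ H.1)).card
      = (Finset.univ \ (R ∪ I)).card - H.1.card := by
    rw [heq, Finset.card_sdiff, Finset.inter_eq_left.mpr hHsub]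
  have hle : H.1.card ≤ (Finset.univ \ (R ∪ I)).card := Finset.card_le_card hHsub
  have hpos : 0 < I.card := Finset.card_pos.mpr (Finset.nonempty_iff_ne_empty.mpr hI)
  omega

lemma phi_eq_zero_aux {V : Type*} [Fintype V] [DecidableEq V]
    (N : Finset V) (p : V → V → ℝ) (i : V) (hi : i ∈ N)
    (m : ℕ) (y : ℕ → V) (hym : y m = i)
    (hyN : ∀ r, 1 ≤ r → r ≤ m → y r ∈ N)
    (hone : ∀ r < m, p (y r) (y (r + 1)) = 1) :
    ∀ d R I k, k < m → m - k ≤ d → y k ∈ I →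
      (∀ j, k < j → j ≤ m → y j ∉ R ∪ I) →
      phi N p {i} R I = 0 := by
  intro d
  induction d with
  | zero => intro R I k hk hd _ _; omega
  | succ d ih =>
    intro R I k hkm hd hkI hj
    rw [phi]
    have hIne : I ≠ ∅ := Finset.ne_empty_of_mem hkI
    rw [dif_neg hIne]
    apply Finset.sum_eq_zero
    intro H _
    have hHsub : H.1 ⊆ N \ (R ∪ I ∪ {i}) := Finset.mem_powerset.mp H.2
    have hiH : i ∉ H.1 := by
      intro h
      have := Finset.mem_sdiff.mp (hHsub h)
      exact this.2 (Finset.mem_union_right _ (Finset.mem_singleton_self i))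
    by_cases hc : y (k + 1) ∈ H.1
    · -- the recursive phi term vanishes
      have hk1m : k + 1 < m := by
        rcases Nat.lt_or_ge (k + 1) m with h | h
        · exact h
        · exfalso
          have : k + 1 = m := by omega
          rw [this, hym] at hc
          exact hiH hc
      set P : ℕ → Prop := fun j => k < j ∧ y j ∈ H.1 with hP
      have hPk1 : P (k + 1) := ⟨Nat.lt_succ_self k, hc⟩
      set k' := Nat.findGreatest P (m - 1) with hk'
      have hspec : P k' := Nat.findGreatest_spec (show k + 1 ≤ m - 1 by omega) hPk1
      have hk'le : k' ≤ m - 1 := Nat.findGreatest_le _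
      have hk'ge : k + 1 ≤ k' := Nat.le_findGreatest (by omega) hPk1
      have hrec : phi N p {i} (R ∪ I) H.1 = 0 := by
        apply ih (R ∪ I) H.1 k' (by omega) (by omega) hspec.2
        intro j hj1 hj2
        rw [Finset.mem_union]
        rintro (h | h)
        · exact hj j (by omega) hj2 h
        · rcases eq_or_lt_of_le hj2 with rfl | hlt
          · rw [hym] at h; exact hiH h
          · exact (Nat.findGreatest_is_greatest hj1 (by omega)) ⟨by omega, h⟩
      rw [hrec, mul_zero]
    · -- the Q factor vanishes
      have hmem : y (k + 1) ∈ N \ (H.1 ∪ R ∪ I) := by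
        rw [Finset.mem_sdiff]
        refine ⟨?_, ?_⟩
        · rcases eq_or_lt_of_le (show k + 1 ≤ m by omega) with heq | hlt
          · rw [heq, hym]; exact hi
          · exact hyN (k + 1) (by omega) (by omega)
        · have h2 := hj (k + 1) (by omega) (by omega)
          rw [Finset.mem_union] at h2
          simp only [Finset.mem_union, not_or]
          push_neg at h2
          exact ⟨⟨hc, h2.1⟩, h2.2⟩
      have hQ : (∏ kk ∈ N \ (H.1 ∪ R ∪ I), ∏ l ∈ I, (1 - p l kk)) = 0 := by
        apply Finset.prod_eq_zero hmem
        apply Finset.prod_eq_zero hkI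
        rw [hone k (by omega)]; ring
      rw [hQ, mul_zero, zero_mul]

/-- **Deterministic delivery.**  If there is a path from the source `s` to node `i`
along which every forwarding probability equals `1`, then the non-delivery
probability of `i` is `0`, i.e. `φ[∅, {s} | p, {i}] = 0`. -/
theorem deterministic_delivery
    {V : Type*} [Fintype V] [DecidableEq V]
    (N : Finset V) (s : V) (hs : s ∉ N)
    (p : V → V → ℝ)
    (hp : ∀ l ∈ insert s N, ∀ k ∈ N, 0 ≤ p l k ∧ p l k ≤ 1)
    (i : V) (hi : i ∈ N)
    (n : ℕ) (x : ℕ → V)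
    (hn : 1 ≤ n) (hx0 : x 0 = s) (hxn : x n = i)
    (hxN : ∀ r, 1 ≤ r → r ≤ n → x r ∈ N)
    (hone : ∀ r < n, p (x r) (x (r + 1)) = 1) :
    phi N p {i} ∅ {s} = 0 := by
  apply phi_eq_zero_aux N p i hi n x hxn hxN hone n ∅ {s} 0 hn (by omega)
  · rw [hx0]; exact Finset.mem_singleton_self s
  · intro j hj1 hj2
    simp only [Finset.empty_union, Finset.mem_singleton]
    intro h
    exact hs (h ▸ hxN j hj1 hj2)
end

section
/- Positive reliability: Let p be a probability profile. If there exist a node i ∈ N and a path x_0 = s, x_1, …, x_n = i such that p_{x_r}[x_{r+1}] > 0 for every r ∈ {0, …, n−1}, then q_i[p] < 1, i.e., φ[∅,{s}|p,{i}] < 1. -/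
section aux
variable {V : Type*} [Fintype V] [DecidableEq V]

lemma measure_dec {N₀ L₀ R I H : Finset V} (hI : I ≠ ∅) (hH : H ⊆ N₀ \ (R ∪ I ∪ L₀)) :
    (Finset.univ \ (R ∪ I ∪ H)).card * 2 + H.card
      < (Finset.univ \ (R ∪ I)).card * 2 + I.card := by
  have hHsub : H ⊆ Finset.univ \ (R ∪ I) := by
    intro x hx
    have hx' := Finset.mem_sdiff.mp (hH hx)
    rw [Finset.mem_sdiff]
    exact ⟨Finset.mem_univ x, fun hc => hx'.2 (Finset.mem_union_left _ hc)⟩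
  have heq : Finset.univ \ (R ∪ I ∪ H) = (Finset.univ \ (R ∪ I)) \ H := by
    ext x
    simp only [Finset.mem_sdiff, Finset.mem_union, Finset.mem_univ, true_and]
    tauto
  have hcard : (Finset.univ \ (R ∪ I ∪ H)).card
      = (Finset.univ \ (R ∪ I)).card - H.card := by
    rw [heq, Finset.card_sdiff, Finset.inter_eq_left.mpr hHsub]
  have hle : H.card ≤ (Finset.univ \ (R ∪ I)).card := Finset.card_le_card hHsub
  have hpos : 0 < I.card := Finset.card_pos.mpr (Finset.nonempty_iff_ne_empty.mpr hI)
  omega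

lemma sumPQ (N : Finset V) (p : V → V → ℝ) (L R I : Finset V) :
    ∑ H ∈ (N \ (R ∪ I ∪ L)).powerset.attach,
      (∏ k ∈ H.1, (1 - ∏ l ∈ I, (1 - p l k))) *
        (∏ k ∈ N \ (H.1 ∪ R ∪ I), ∏ l ∈ I, (1 - p l k))
    = ∏ k ∈ (N ∩ L) \ (R ∪ I), ∏ l ∈ I, (1 - p l k) := by
  set a : V → ℝ := fun k => ∏ l ∈ I, (1 - p l k) with ha
  set T := N \ (R ∪ I ∪ L) with hT
  set S := (N ∩ L) \ (R ∪ I) with hS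
  rw [Finset.sum_attach _ (fun H => (∏ k ∈ H, (1 - a k)) * (∏ k ∈ N \ (H ∪ R ∪ I), a k))]
  have key : ∀ H ∈ T.powerset, (∏ k ∈ H, (1 - a k)) * (∏ k ∈ N \ (H ∪ R ∪ I), a k)
      = (∏ k ∈ H, (1 - a k)) * (∏ k ∈ T \ H, a k) * (∏ k ∈ S, a k) := by
    intro H hH
    rw [Finset.mem_powerset] at hH
    have hset : N \ (H ∪ R ∪ I) = (T \ H) ∪ S := by
      ext k
      simp only [hT, hS, Finset.mem_sdiff, Finset.mem_union, Finset.mem_inter, not_or]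
      by_cases hkH : k ∈ H
      · have := hH hkH
        simp only [hT, Finset.mem_sdiff, Finset.mem_union, not_or] at this
        tauto
      · by_cases hkL : k ∈ L <;> tauto
    have hdisj : Disjoint (T \ H) S := by
      refine Finset.disjoint_left.mpr ?_
      intro k hk hkS
      simp only [hT, hS, Finset.mem_sdiff, Finset.mem_union, Finset.mem_inter, not_or] at hk hkS
      tauto
    rw [hset, Finset.prod_union hdisj, mul_assoc]
  rw [Finset.sum_congr rfl key, ← Finset.sum_mul, ← Finset.prod_add]
  simp

omit [Fintype V] in
lemma a_bounds {N I : Finset V} {p : V → V → ℝ}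
    (hp : ∀ l ∈ I ∪ N, ∀ k ∈ N, 0 ≤ p l k ∧ p l k ≤ 1) {k : V} (hk : k ∈ N) :
    0 ≤ ∏ l ∈ I, (1 - p l k) ∧ ∏ l ∈ I, (1 - p l k) ≤ 1 := by
  constructor
  · exact Finset.prod_nonneg fun l hl => by
      have := hp l (Finset.mem_union_left _ hl) k hk; linarith [this.2]
  · exact Finset.prod_le_one
      (fun l hl => by have := hp l (Finset.mem_union_left _ hl) k hk; linarith [this.2])
      (fun l hl => by have := hp l (Finset.mem_union_left _ hl) k hk; linarith [this.1])

end aux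

lemma phi_bounds {V : Type*} [Fintype V] [DecidableEq V]
    (N : Finset V) (p : V → V → ℝ) (L : Finset V) (R I : Finset V)
    (hp : ∀ l ∈ I ∪ N, ∀ k ∈ N, 0 ≤ p l k ∧ p l k ≤ 1) :
    0 ≤ phi N p L R I ∧ phi N p L R I ≤ 1 := by
  rw [phi]
  by_cases hI : I = ∅
  · simp [hI]
  rw [dif_neg hI]
  have hterm : ∀ H ∈ (N \ (R ∪ I ∪ L)).powerset.attach,
      0 ≤ (∏ k ∈ H.1, (1 - ∏ l ∈ I, (1 - p l k))) *
        (∏ k ∈ N \ (H.1 ∪ R ∪ I), ∏ l ∈ I, (1 - p l k)) := by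
    intro H _
    have hH := Finset.mem_powerset.mp H.2
    apply mul_nonneg
    · refine Finset.prod_nonneg fun k hk => ?_
      have hkN : k ∈ N := (Finset.mem_sdiff.mp (hH hk)).1
      linarith [(a_bounds hp hkN).2]
    · refine Finset.prod_nonneg fun k hk => ?_
      have hkN : k ∈ N := (Finset.mem_sdiff.mp hk).1
      exact (a_bounds hp hkN).1
  have hrecb : ∀ H : {x // x ∈ (N \ (R ∪ I ∪ L)).powerset},
      0 ≤ phi N p L (R ∪ I) H.1 ∧ phi N p L (R ∪ I) H.1 ≤ 1 := by
    intro H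
    have hH := Finset.mem_powerset.mp H.2
    have hp' : ∀ l ∈ H.1 ∪ N, ∀ k ∈ N, 0 ≤ p l k ∧ p l k ≤ 1 := by
      intro l hl
      rcases Finset.mem_union.mp hl with h | h
      · exact hp l (Finset.mem_union_right _ ((Finset.mem_sdiff.mp (hH h)).1))
      · exact hp l (Finset.mem_union_right _ h)
    exact phi_bounds N p L (R ∪ I) H.1 hp'
  constructor
  · exact Finset.sum_nonneg fun H hH => mul_nonneg (hterm H hH) (hrecb H).1
  · calc ∑ H ∈ (N \ (R ∪ I ∪ L)).powerset.attach,
        (∏ k ∈ H.1, (1 - ∏ l ∈ I, (1 - p l k))) *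
          (∏ k ∈ N \ (H.1 ∪ R ∪ I), ∏ l ∈ I, (1 - p l k)) *
          phi N p L (R ∪ I) H.1
        ≤ ∑ H ∈ (N \ (R ∪ I ∪ L)).powerset.attach,
        (∏ k ∈ H.1, (1 - ∏ l ∈ I, (1 - p l k))) *
          (∏ k ∈ N \ (H.1 ∪ R ∪ I), ∏ l ∈ I, (1 - p l k)) := by
          refine Finset.sum_le_sum fun H hH => ?_
          have h1 := hrecb H
          nlinarith [hterm H hH, h1.1, h1.2]
      _ = ∏ k ∈ (N ∩ L) \ (R ∪ I), ∏ l ∈ I, (1 - p l k) := sumPQ N p L R I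
      _ ≤ 1 := Finset.prod_le_one
          (fun k hk => (a_bounds hp (Finset.mem_inter.mp (Finset.mem_sdiff.mp hk).1).1).1)
          (fun k hk => (a_bounds hp (Finset.mem_inter.mp (Finset.mem_sdiff.mp hk).1).1).2)
termination_by (Finset.univ \ (R ∪ I)).card * 2 + I.card
decreasing_by
  exact measure_dec hI (Finset.mem_powerset.mp H.2)

lemma phi_lt_one {V : Type*} [Fintype V] [DecidableEq V]
    (N : Finset V) (p : V → V → ℝ) (i : V) (R I : Finset V)
    (hp : ∀ l ∈ I ∪ N, ∀ k ∈ N, 0 ≤ p l k ∧ p l k ≤ 1)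
    (hiN : i ∈ N) (hiR : i ∉ R) (hiI : i ∉ I)
    (m : ℕ) (y : ℕ → V) (hm : 1 ≤ m) (hy0 : y 0 ∈ I)
    (hyN : ∀ j, 1 ≤ j → j ≤ m → y j ∈ N ∧ y j ∉ R ∧ y j ∉ I)
    (hym : y m = i)
    (hpos : ∀ j < m, 0 < p (y j) (y (j + 1))) :
    phi N p {i} R I < 1 := by
  classical
  have hI : I ≠ ∅ := Finset.nonempty_iff_ne_empty.mp ⟨y 0, hy0⟩
  have haly : ∀ k ∈ N, 0 < p (y 0) k → ∏ l ∈ I, (1 - p l k) < 1 := by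
    intro k hkN hpk
    have h1 : (1 - p (y 0) k) * ∏ l ∈ I.erase (y 0), (1 - p l k) = ∏ l ∈ I, (1 - p l k) :=
      Finset.mul_prod_erase I (fun l => 1 - p l k) hy0
    have h2 : ∏ l ∈ I.erase (y 0), (1 - p l k) ≤ 1 := Finset.prod_le_one
      (fun l hl => by
        have := hp l (Finset.mem_union_left _ (Finset.erase_subset _ _ hl)) k hkN; linarith [this.2])
      (fun l hl => by
        have := hp l (Finset.mem_union_left _ (Finset.erase_subset _ _ hl)) k hkN; linarith [this.1])
    have h3 : 0 ≤ ∏ l ∈ I.erase (y 0), (1 - p l k) := Finset.prod_nonneg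
      (fun l hl => by
        have := hp l (Finset.mem_union_left _ (Finset.erase_subset _ _ hl)) k hkN; linarith [this.2])
    have h4 := hp (y 0) (Finset.mem_union_left _ hy0) k hkN
    nlinarith
  have hy1 := hyN 1 le_rfl hm
  have hay1 : ∏ l ∈ I, (1 - p l (y 1)) < 1 := haly (y 1) hy1.1 (hpos 0 hm)
  have hSi : (N ∩ {i}) \ (R ∪ I) = {i} := by
    ext k
    simp only [Finset.mem_sdiff, Finset.mem_inter, Finset.mem_singleton, Finset.mem_union, not_or]
    constructor
    · tauto
    · rintro rfl; exact ⟨⟨hiN, rfl⟩, hiR, hiI⟩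
  have hsumPQ : ∑ H ∈ (N \ (R ∪ I ∪ {i})).powerset.attach,
      (∏ k ∈ H.1, (1 - ∏ l ∈ I, (1 - p l k))) *
        (∏ k ∈ N \ (H.1 ∪ R ∪ I), ∏ l ∈ I, (1 - p l k))
      = ∏ l ∈ I, (1 - p l i) := by
    rw [sumPQ N p {i} R I, hSi, Finset.prod_singleton]
  -- nonnegativity of the PQ terms
  have hterm : ∀ H ∈ (N \ (R ∪ I ∪ {i})).powerset.attach,
      0 ≤ (∏ k ∈ H.1, (1 - ∏ l ∈ I, (1 - p l k))) *
        (∏ k ∈ N \ (H.1 ∪ R ∪ I), ∏ l ∈ I, (1 - p l k)) := by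
    intro H _
    have hH := Finset.mem_powerset.mp H.2
    apply mul_nonneg
    · refine Finset.prod_nonneg fun k hk => ?_
      have hkN : k ∈ N := (Finset.mem_sdiff.mp (hH hk)).1
      linarith [(a_bounds hp hkN).2]
    · refine Finset.prod_nonneg fun k hk => ?_
      exact (a_bounds hp (Finset.mem_sdiff.mp hk).1).1
  have hrecb : ∀ H : {x // x ∈ (N \ (R ∪ I ∪ {i})).powerset},
      0 ≤ phi N p {i} (R ∪ I) H.1 ∧ phi N p {i} (R ∪ I) H.1 ≤ 1 := by
    intro H
    have hH := Finset.mem_powerset.mp H.2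
    have hp' : ∀ l ∈ H.1 ∪ N, ∀ k ∈ N, 0 ≤ p l k ∧ p l k ≤ 1 := by
      intro l hl
      rcases Finset.mem_union.mp hl with h | h
      · exact hp l (Finset.mem_union_right _ ((Finset.mem_sdiff.mp (hH h)).1))
      · exact hp l (Finset.mem_union_right _ h)
    exact phi_bounds N p {i} (R ∪ I) H.1 hp'
  rw [phi, dif_neg hI]
  have hub : ∑ H ∈ (N \ (R ∪ I ∪ {i})).powerset.attach,
      (∏ k ∈ H.1, (1 - ∏ l ∈ I, (1 - p l k))) *
        (∏ k ∈ N \ (H.1 ∪ R ∪ I), ∏ l ∈ I, (1 - p l k)) *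
        phi N p {i} (R ∪ I) H.1
      ≤ ∏ l ∈ I, (1 - p l i) := by
    rw [← hsumPQ]
    refine Finset.sum_le_sum fun H hH => ?_
    have h1 := hrecb H
    nlinarith [hterm H hH, h1.1, h1.2]
  rcases lt_or_eq_of_le (a_bounds hp hiN).2 with hai | hai
  · exact lt_of_le_of_lt hub hai
  -- now ∏ l ∈ I, (1 - p l i) = 1
  set H0 : Finset V := (N \ (R ∪ I ∪ {i})).filter (fun k => ∏ l ∈ I, (1 - p l k) < 1) with hH0
  have hy1i : y 1 ≠ i := by
    intro h; rw [h, hai] at hay1; exact lt_irrefl 1 hay1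
  have hy1H0 : y 1 ∈ H0 := by
    rw [hH0, Finset.mem_filter, Finset.mem_sdiff]
    refine ⟨⟨hy1.1, ?_⟩, hay1⟩
    simp only [Finset.mem_union, Finset.mem_singleton, not_or]
    exact ⟨⟨hy1.2.1, hy1.2.2⟩, hy1i⟩
  have hH0sub : H0 ⊆ N \ (R ∪ I ∪ {i}) := Finset.filter_subset _ _
  have hiH0 : i ∉ H0 := by
    intro h
    have := Finset.mem_sdiff.mp (hH0sub h)
    simp [Finset.mem_union] at this
  -- find greatest index landing in H0
  set J := Nat.findGreatest (fun j => y j ∈ H0) m with hJ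
  have hJ1 : 1 ≤ J := Nat.le_findGreatest (P := fun j => y j ∈ H0) hm hy1H0
  have hJspec : y J ∈ H0 := Nat.findGreatest_spec (P := fun j => y j ∈ H0) hm hy1H0
  have hJle : J ≤ m := Nat.findGreatest_le m
  have hJm : J < m := by
    rcases lt_or_eq_of_le hJle with h | h
    · exact h
    · exfalso; rw [h, hym] at hJspec; exact hiH0 hJspec
  -- recursive call on (R ∪ I, H0)
  have hp' : ∀ l ∈ H0 ∪ N, ∀ k ∈ N, 0 ≤ p l k ∧ p l k ≤ 1 := by
    intro l hl
    rcases Finset.mem_union.mp hl with h | h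
    · exact hp l (Finset.mem_union_right _ ((Finset.mem_sdiff.mp (hH0sub h)).1))
    · exact hp l (Finset.mem_union_right _ h)
  have hrec : phi N p {i} (R ∪ I) H0 < 1 := by
    refine phi_lt_one N p i (R ∪ I) H0 hp' hiN ?_ hiH0 (m - J) (fun j => y (J + j)) ?_ ?_ ?_ ?_ ?_
    · simp only [Finset.mem_union, not_or]; exact ⟨hiR, hiI⟩
    · omega
    · simpa using hJspec
    · intro j hj1 hjm
      have hle : J + j ≤ m := by omega
      have hge : 1 ≤ J + j := by omega
      have h1 := hyN (J + j) hge hle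
      refine ⟨h1.1, ?_, ?_⟩
      · simp only [Finset.mem_union, not_or]; exact ⟨h1.2.1, h1.2.2⟩
      · exact Nat.findGreatest_is_greatest (P := fun j => y j ∈ H0) (k := J + j) (by omega) hle
    · show y (J + (m - J)) = i
      have h5 : J + (m - J) = m := by omega
      rw [h5, hym]
    · intro j hj
      show 0 < p (y (J + j)) (y (J + (j + 1)))
      have h6 : J + (j + 1) = J + j + 1 := by omega
      rw [h6]
      exact hpos (J + j) (by omega)
  -- the H0 element of the attach'd powerset
  have hH0P : H0 ∈ (N \ (R ∪ I ∪ {i})).powerset := Finset.mem_powerset.mpr hH0sub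
  set e0 : {x // x ∈ (N \ (R ∪ I ∪ {i})).powerset} := ⟨H0, hH0P⟩ with he0
  -- P(H0) > 0
  have hP0 : 0 < ∏ k ∈ H0, (1 - ∏ l ∈ I, (1 - p l k)) := by
    refine Finset.prod_pos fun k hk => ?_
    have := (Finset.mem_filter.mp hk).2
    linarith
  -- Q(H0) = 1
  have hQ0 : ∏ k ∈ N \ (H0 ∪ R ∪ I), ∏ l ∈ I, (1 - p l k) = 1 := by
    refine Finset.prod_eq_one fun k hk => ?_
    have hk' := Finset.mem_sdiff.mp hk
    simp only [Finset.mem_union, not_or] at hk'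
    by_cases hki : k = i
    · rw [hki]; exact hai
    · have hkT : k ∈ N \ (R ∪ I ∪ {i}) := by
        simp only [Finset.mem_sdiff, Finset.mem_union, Finset.mem_singleton, not_or]
        exact ⟨hk'.1, ⟨hk'.2.1.2, hk'.2.2⟩, hki⟩
      have hknH0 : k ∉ H0 := hk'.2.1.1
      have : ¬ (∏ l ∈ I, (1 - p l k) < 1) := by
        intro h
        exact hknH0 (by rw [hH0, Finset.mem_filter]; exact ⟨hkT, h⟩)
      have h2 := (a_bounds hp hk'.1).2
      linarith
  -- final estimate
  set F : {x // x ∈ (N \ (R ∪ I ∪ {i})).powerset} → ℝ := fun H =>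
    (∏ k ∈ H.1, (1 - ∏ l ∈ I, (1 - p l k))) *
      (∏ k ∈ N \ (H.1 ∪ R ∪ I), ∏ l ∈ I, (1 - p l k)) with hF
  have hgap : ∀ H ∈ (N \ (R ∪ I ∪ {i})).powerset.attach,
      0 ≤ F H * (1 - phi N p {i} (R ∪ I) H.1) := by
    intro H hH
    have h1 := hrecb H
    have h2 := hterm H hH
    simp only [hF]
    nlinarith
  have hssingle : F e0 * (1 - phi N p {i} (R ∪ I) e0.1)
      ≤ ∑ H ∈ (N \ (R ∪ I ∪ {i})).powerset.attach,
          F H * (1 - phi N p {i} (R ∪ I) H.1) :=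
    Finset.single_le_sum hgap (Finset.mem_attach _ e0)
  have hFe0 : 0 < F e0 := by
    show 0 < (∏ k ∈ H0, (1 - ∏ l ∈ I, (1 - p l k))) *
      (∏ k ∈ N \ (H0 ∪ R ∪ I), ∏ l ∈ I, (1 - p l k))
    rw [hQ0, mul_one]; exact hP0
  have hgap0 : 0 < F e0 * (1 - phi N p {i} (R ∪ I) e0.1) := by
    have h7 : phi N p {i} (R ∪ I) e0.1 = phi N p {i} (R ∪ I) H0 := rfl
    rw [h7]
    have : 0 < 1 - phi N p {i} (R ∪ I) H0 := by linarith [hrec]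
    exact mul_pos hFe0 this
  have hsplit : ∑ H ∈ (N \ (R ∪ I ∪ {i})).powerset.attach,
      (∏ k ∈ H.1, (1 - ∏ l ∈ I, (1 - p l k))) *
        (∏ k ∈ N \ (H.1 ∪ R ∪ I), ∏ l ∈ I, (1 - p l k)) *
        phi N p {i} (R ∪ I) H.1
      = (∑ H ∈ (N \ (R ∪ I ∪ {i})).powerset.attach, F H)
        - ∑ H ∈ (N \ (R ∪ I ∪ {i})).powerset.attach,
            F H * (1 - phi N p {i} (R ∪ I) H.1) := by
    rw [← Finset.sum_sub_distrib]
    refine Finset.sum_congr rfl fun H _ => ?_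
    simp only [hF]; ring
  rw [hsplit]
  have hsumF : ∑ H ∈ (N \ (R ∪ I ∪ {i})).powerset.attach, F H = 1 := by
    rw [show (∑ H ∈ (N \ (R ∪ I ∪ {i})).powerset.attach, F H)
      = (N \ (R ∪ I ∪ {i})).powerset.attach.sum F from rfl, hsumPQ, hai]
  rw [hsumF]
  linarith
termination_by (Finset.univ \ (R ∪ I)).card * 2 + I.card
decreasing_by
  exact measure_dec hI hH0sub


/-- **Positive reliability.**  If there is a path from the source `s` to node `i`
along which every forwarding probability is positive, then the non-delivery
probability of `i` is strictly smaller than `1`, i.e. `φ[∅, {s} | p, {i}] < 1`. -/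
theorem positive_reliability
    {V : Type*} [Fintype V] [DecidableEq V]
    (N : Finset V) (s : V) (hs : s ∉ N)
    (p : V → V → ℝ)
    (hp : ∀ l ∈ insert s N, ∀ k ∈ N, 0 ≤ p l k ∧ p l k ≤ 1)
    (i : V) (hi : i ∈ N)
    (n : ℕ) (x : ℕ → V)
    (hn : 1 ≤ n) (hx0 : x 0 = s) (hxn : x n = i)
    (hxN : ∀ r, 1 ≤ r → r ≤ n → x r ∈ N)
    (hpos : ∀ r < n, 0 < p (x r) (x (r + 1))) :
    phi N p {i} ∅ {s} < 1 := by
  refine phi_lt_one N p i ∅ {s} ?_ hi (Finset.notMem_empty i) ?_ n x hn ?_ ?_ hxn hpos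
  · intro l hl
    refine hp l ?_
    rw [Finset.insert_eq]
    exact hl
  · simp only [Finset.mem_singleton]
    exact fun h => hs (h ▸ hi)
  · rw [hx0]; exact Finset.mem_singleton_self s
  · intro j hj1 hjn
    have hN := hxN j hj1 hjn
    refine ⟨hN, Finset.notMem_empty _, ?_⟩
    simp only [Finset.mem_singleton]
    exact fun h => hs (h ▸ hN)
end

section
/- Null reliability: Let p be a probability profile and i ∈ N a node such that p_j[i] = 0 for every j ∈ N ∪ {s}. Then q_i[p] = 1, i.e., φ[∅,{s}|p,{i}] = 1. -/
theorem phi_one_aux {V : Type*} [Fintype V] [DecidableEq V]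
    (N : Finset V) (s : V) (p : V → V → ℝ) (i : V) (hi : i ∈ N)
    (hzero : ∀ j ∈ insert s N, p j i = 0) :
    ∀ n R I, (Finset.univ \ (R ∪ I)).card * 2 + I.card ≤ n → I ⊆ insert s N →
      phi N p {i} R I = 1 := by
  intro n
  induction n using Nat.strong_induction_on with
  | _ n ih =>
    intro R I hn hI
    rw [phi]
    split
    · rfl
    · rename_i hIne
      set S := N \ (R ∪ I ∪ {i}) with hS
      have hchild : ∀ H ∈ S.powerset.attach, phi N p {i} (R ∪ I) H.1 = 1 := by
        intro H _
        have hHsub : H.1 ⊆ S := Finset.mem_powerset.mp H.2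
        have hHsub' : H.1 ⊆ Finset.univ \ (R ∪ I) := by
          intro x hx
          have hx' := Finset.mem_sdiff.mp (hHsub hx)
          exact Finset.mem_sdiff.mpr ⟨Finset.mem_univ x,
            fun hc => hx'.2 (Finset.mem_union_left _ hc)⟩
        have heq : Finset.univ \ (R ∪ I ∪ H.1) = (Finset.univ \ (R ∪ I)) \ H.1 := by
          ext x
          simp only [Finset.mem_sdiff, Finset.mem_union, Finset.mem_univ, true_and]
          tauto
        have hle : H.1.card ≤ (Finset.univ \ (R ∪ I)).card := Finset.card_le_card hHsub'
        have hcard : (Finset.univ \ (R ∪ I ∪ H.1)).card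
            = (Finset.univ \ (R ∪ I)).card - H.1.card := by
          rw [heq, Finset.card_sdiff, Finset.inter_eq_left.mpr hHsub']
        have hpos : 0 < I.card := Finset.card_pos.mpr (Finset.nonempty_iff_ne_empty.mpr hIne)
        have hlt : (Finset.univ \ (R ∪ I ∪ H.1)).card * 2 + H.1.card < n := by omega
        exact ih _ hlt (R ∪ I) H.1 le_rfl (fun x hx =>
          Finset.mem_insert_of_mem (Finset.mem_sdiff.mp (hHsub hx)).1)
      rw [Finset.sum_congr rfl (fun H hH => by rw [hchild H hH, mul_one])]
      rw [Finset.sum_attach S.powerset (fun t =>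
        (∏ k ∈ t, (1 - ∏ l ∈ I, (1 - p l k))) * ∏ k ∈ N \ (t ∪ R ∪ I), ∏ l ∈ I, (1 - p l k))]
      have hQ : ∀ t ∈ S.powerset,
          (∏ k ∈ N \ (t ∪ R ∪ I), ∏ l ∈ I, (1 - p l k))
            = ∏ k ∈ S \ t, ∏ l ∈ I, (1 - p l k) := by
        intro t ht
        have htS := Finset.mem_powerset.mp ht
        refine (Finset.prod_subset ?_ ?_).symm
        · intro x hx
          rcases Finset.mem_sdiff.mp hx with ⟨hxS, hxt⟩
          rcases Finset.mem_sdiff.mp hxS with ⟨hxN, hxU⟩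
          simp only [Finset.mem_sdiff, Finset.mem_union] at hxU ⊢
          tauto
        · intro x hx hx'
          rcases Finset.mem_sdiff.mp hx with ⟨hxN, hxU⟩
          simp only [Finset.mem_union] at hxU
          have hxi : x = i := by
            by_contra hne
            apply hx'
            simp only [hS, Finset.mem_sdiff, Finset.mem_union, Finset.mem_singleton]
            tauto
          subst hxi
          refine Finset.prod_eq_one (fun l hl => ?_)
          rw [hzero l (hI hl)]; ring
      rw [Finset.sum_congr rfl (fun t ht => by rw [hQ t ht])]
      rw [← Finset.prod_add]
      refine Finset.prod_eq_one (fun k _ => by ring)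

/-- **Null reliability.**  If no node (including the source `s`) ever forwards
messages to `i`, i.e. `p_j[i] = 0` for every `j ∈ N ∪ {s}`, then the non-delivery
probability of `i` is `1`, i.e. `φ[∅, {s} | p, {i}] = 1`. -/
theorem null_reliability
    {V : Type*} [Fintype V] [DecidableEq V]
    (N : Finset V) (s : V) (hs : s ∉ N)
    (p : V → V → ℝ)
    (hp : ∀ l ∈ insert s N, ∀ k ∈ N, 0 ≤ p l k ∧ p l k ≤ 1)
    (i : V) (hi : i ∈ N)
    (hzero : ∀ j ∈ insert s N, p j i = 0) :
    phi N p {i} ∅ {s} = 1 := by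
  exact phi_one_aux N s p i hi hzero _ ∅ {s} le_rfl (by simp)
end

section
/- Irrelevance of unreachable nodes: Let p be a probability profile respecting G, i ∈ N, R ⊆ (N ∪ {s}) ∖ {i}, I ⊆ D_i ∖ R, and let L_1, L_2 ⊆ N ∖ (D_i ∪ R ∪ {i}) be disjoint sets. Then φ[R ∪ L_1, I ∪ L_2 | p, {i}] = φ[R, I | p, {i}]. -/
/-- `IsGPath N G a b n x` : the sequence `x 0 = a, x 1, …, x n = b` (with `n ≥ 1` and
`x 1, …, x n ∈ N`) is a path all of whose consecutive pairs are edges of `G`. -/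
def IsGPath {V : Type*} (N : Finset V) (G : V → V → Prop)
    (a b : V) (n : ℕ) (x : ℕ → V) : Prop :=
  1 ≤ n ∧ x 0 = a ∧ x n = b ∧ (∀ r, 1 ≤ r → r ≤ n → x r ∈ N) ∧
    ∀ r < n, G (x r) (x (r + 1))

open Classical in
/-- `Dset N s G i` : the set of vertices `j ∈ (N ∪ {s}) \ {i}` from which `i` is
reachable by a `G`-path. -/
noncomputable def Dset {V : Type*} [DecidableEq V]
    (N : Finset V) (s : V) (G : V → V → Prop) (i : V) : Finset V :=
  (insert s N).filter fun j => j ≠ i ∧ ∃ n x, IsGPath N G j i n x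

lemma inter_union_left {V : Type*} [DecidableEq V] {A B x1 x2 : Finset V}
    (h : Disjoint A B) (h1 : x1 ⊆ A) (h2 : x2 ⊆ B) : (x1 ∪ x2) ∩ A = x1 := by
  ext a
  simp only [Finset.mem_inter, Finset.mem_union]
  constructor
  · rintro ⟨h1' | h2', ha⟩
    · exact h1'
    · exact (Finset.disjoint_right.mp h (h2 h2') ha).elim
  · intro hx
    exact ⟨Or.inl hx, h1 hx⟩

lemma sum_powerset_split {V : Type*} [DecidableEq V] {A B : Finset V}
    (h : Disjoint A B) (f : Finset V → ℝ) :
    ∑ H ∈ (A ∪ B).powerset, f H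
      = ∑ H1 ∈ A.powerset, ∑ H2 ∈ B.powerset, f (H1 ∪ H2) := by
  have hp := Finset.sum_product' (s := A.powerset) (t := B.powerset)
    (f := fun H1 H2 => f (H1 ∪ H2))
  rw [← hp]
  refine Finset.sum_nbij' (fun H => (H ∩ A, H ∩ B)) (fun x => x.1 ∪ x.2) ?_ ?_ ?_ ?_ ?_
  · intro H hH
    simp only [Finset.mem_product, Finset.mem_powerset]
    exact ⟨Finset.inter_subset_right, Finset.inter_subset_right⟩
  · intro x hx
    simp only [Finset.mem_product, Finset.mem_powerset] at hx
    exact Finset.mem_powerset.mpr (Finset.union_subset_union hx.1 hx.2)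
  · intro H hH
    rw [Finset.mem_powerset] at hH
    show H ∩ A ∪ H ∩ B = H
    rw [← Finset.inter_union_distrib_left, Finset.inter_eq_left.mpr hH]
  · intro x hx
    simp only [Finset.mem_product, Finset.mem_powerset] at hx
    show ((x.1 ∪ x.2) ∩ A, (x.1 ∪ x.2) ∩ B) = x
    refine Prod.ext (inter_union_left h hx.1 hx.2) ?_
    rw [Finset.union_comm]
    exact inter_union_left h.symm hx.2 hx.1
  · intro H hH
    show f H = f (H ∩ A ∪ H ∩ B)
    rw [Finset.mem_powerset] at hH
    rw [← Finset.inter_union_distrib_left, Finset.inter_eq_left.mpr hH]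



lemma phi_eq {V : Type*} [Fintype V] [DecidableEq V]
    (N : Finset V) (p : V → V → ℝ) (L : Finset V) (R I : Finset V) (hI : I ≠ ∅) :
    phi N p L R I = ∑ H ∈ (N \ (R ∪ I ∪ L)).powerset,
      (∏ k ∈ H, (1 - ∏ l ∈ I, (1 - p l k))) *
        (∏ k ∈ N \ (H ∪ R ∪ I), ∏ l ∈ I, (1 - p l k)) *
        phi N p L (R ∪ I) H := by
  rw [phi, dif_neg hI]
  exact Finset.sum_attach _ fun H => (∏ k ∈ H, (1 - ∏ l ∈ I, (1 - p l k))) *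
    (∏ k ∈ N \ (H ∪ R ∪ I), ∏ l ∈ I, (1 - p l k)) * phi N p L (R ∪ I) H

lemma phi_empty {V : Type*} [Fintype V] [DecidableEq V]
    (N : Finset V) (p : V → V → ℝ) (L : Finset V) (R : Finset V) :
    phi N p L R ∅ = 1 := by
  rw [phi]; simp

lemma sum_powerset_weights {V : Type*} [DecidableEq V] (S : Finset V) (g : V → ℝ) :
    ∑ H ∈ S.powerset, (∏ k ∈ H, (1 - g k)) * ∏ k ∈ S \ H, g k = 1 := by
  rw [← Finset.prod_add]
  simp

lemma pzero {V : Type*} [DecidableEq V] (N : Finset V) (s : V) (G : V → V → Prop)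
    (hG : ∀ a b, G a b → a ∈ insert s N ∧ b ∈ N)
    (p : V → V → ℝ) (hresp : ∀ l k, ¬ G l k → p l k = 0)
    (i : V) (hi : i ∈ N) (l k : V)
    (hl : l ∉ Dset N s G i) (hli : l ≠ i) (hk : k ∈ Dset N s G i ∨ k = i) :
    p l k = 0 := by
  classical
  apply hresp
  intro hGlk
  apply hl
  rw [Dset, Finset.mem_filter]
  refine ⟨(hG l k hGlk).1, hli, ?_⟩
  rcases hk with hk | rfl
  · rw [Dset, Finset.mem_filter] at hk
    obtain ⟨-, -, n, x, hn, hx0, hxn, hmem, hedge⟩ := hk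
    refine ⟨n + 1, fun r => if r = 0 then l else x (r - 1), le_add_self, by simp, ?_, ?_, ?_⟩
    · simpa using hxn
    · intro r hr1 hr2
      have hr : r ≠ 0 := by omega
      simp only [hr, if_false]
      rcases Nat.eq_or_lt_of_le hr1 with h | h
      · have : r - 1 = 0 := by omega
        rw [this, hx0]
        exact (hG l k hGlk).2
      · exact hmem (r - 1) (by omega) (by omega)
    · intro r hr
      rcases Nat.eq_zero_or_pos r with rfl | hpos
      · simpa [hx0] using hGlk
      · have h1 : r ≠ 0 := by omega
        have h2 : r + 1 ≠ 0 := by omega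
        simp only [h1, h2, if_false]
        have := hedge (r - 1) (by omega)
        have heq : r - 1 + 1 = r + 1 - 1 := by omega
        rwa [heq] at this
  · refine ⟨1, fun r => if r = 0 then l else k, le_rfl, by simp, by simp, ?_, ?_⟩
    · intro r hr1 hr2
      have : r = 1 := by omega
      simp [this, hi]
    · intro r hr
      have : r = 0 := by omega
      simpa [this] using hGlk

lemma phi_one {V : Type*} [Fintype V] [DecidableEq V]
    (N : Finset V) (s : V) (G : V → V → Prop)
    (hG : ∀ a b, G a b → a ∈ insert s N ∧ b ∈ N)
    (p : V → V → ℝ) (hresp : ∀ l k, ¬ G l k → p l k = 0)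
    (i : V) (hi : i ∈ N) :
    ∀ n (R' L2' : Finset V), (N \ R').card ≤ n → i ∉ R' → L2' ⊆ N →
      (∀ l ∈ L2', l ∉ Dset N s G i ∧ l ≠ i) → Disjoint R' L2' →
      phi N p {i} R' L2' = 1 := by
  intro n
  induction n with
  | zero =>
    intro R' L2' hcard hiR hL2N hL2D hdis
    have hL2e : L2' = ∅ := by
      rw [← Finset.subset_empty]
      intro a ha
      exfalso
      have haN : a ∈ N \ R' := Finset.mem_sdiff.mpr ⟨hL2N ha, Finset.disjoint_right.mp hdis ha⟩
      have := Finset.card_pos.mpr ⟨a, haN⟩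
      omega
    rw [hL2e, phi_empty]
  | succ n ih =>
    intro R' L2' hcard hiR hL2N hL2D hdis
    rcases eq_or_ne L2' ∅ with rfl | hne
    · rw [phi_empty]
    · rw [phi_eq _ _ _ _ _ hne]
      have hiL2 : i ∉ L2' := fun h => (hL2D i h).2 rfl
      have hQ : ∀ H : Finset V, H ⊆ N \ (R' ∪ L2' ∪ {i}) →
          N \ (H ∪ R' ∪ L2') = insert i ((N \ (R' ∪ L2' ∪ {i})) \ H) := by
        intro H hH
        ext a
        have haH : a ∈ H → a ∈ N ∧ ¬((a ∈ R' ∨ a ∈ L2') ∨ a = i) := by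
          intro h
          have := Finset.mem_sdiff.mp (hH h)
          simpa only [Finset.mem_union, Finset.mem_singleton] using this
        simp only [Finset.mem_sdiff, Finset.mem_union, Finset.mem_insert,
          Finset.mem_singleton]
        constructor
        · rintro ⟨haN, ha⟩
          by_cases hai : a = i
          · exact Or.inl hai
          · exact Or.inr ⟨⟨haN, by tauto⟩, by tauto⟩
        · rintro (rfl | h)
          · exact ⟨hi, by tauto⟩
          · tauto
      have hprodL : ∀ k, (k ∈ Dset N s G i ∨ k = i) → ∏ l ∈ L2', (1 - p l k) = 1 := by
        intro k hk
        refine Finset.prod_eq_one fun l hl => ?_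
        rw [pzero N s G hG p hresp i hi l k (hL2D l hl).1 (hL2D l hl).2 hk]
        ring
      have step : ∀ H ∈ (N \ (R' ∪ L2' ∪ {i})).powerset,
          (∏ k ∈ H, (1 - ∏ l ∈ L2', (1 - p l k))) *
            (∏ k ∈ N \ (H ∪ R' ∪ L2'), ∏ l ∈ L2', (1 - p l k)) *
            phi N p {i} (R' ∪ L2') H
          = (∏ k ∈ H, (1 - ∏ l ∈ L2', (1 - p l k))) *
            ∏ k ∈ (N \ (R' ∪ L2' ∪ {i})) \ H, ∏ l ∈ L2', (1 - p l k) := by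
        intro H hH
        rw [Finset.mem_powerset] at hH
        have hiH : i ∉ H := fun h => (Finset.mem_sdiff.mp (hH h)).2 (by simp)
        have hinotin : i ∉ (N \ (R' ∪ L2' ∪ {i})) \ H :=
          fun h => (Finset.mem_sdiff.mp (Finset.mem_sdiff.mp h).1).2 (by simp)
        rw [hQ H hH, Finset.prod_insert hinotin, hprodL i (Or.inr rfl), one_mul]
        by_cases hHD : ∃ k ∈ H, k ∈ Dset N s G i
        · obtain ⟨k0, hk0H, hk0D⟩ := hHD
          have hz : ∏ k ∈ H, (1 - ∏ l ∈ L2', (1 - p l k)) = 0 := by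
            apply Finset.prod_eq_zero hk0H
            rw [hprodL k0 (Or.inl hk0D)]; ring
          rw [hz]; ring
        · push_neg at hHD
          have hphi : phi N p {i} (R' ∪ L2') H = 1 := by
            apply ih
            · obtain ⟨a, ha⟩ := Finset.nonempty_iff_ne_empty.mpr hne
              have hsub : N \ (R' ∪ L2') ⊆ N \ R' := by
                intro x hx
                simp only [Finset.mem_sdiff, Finset.mem_union] at hx ⊢
                tauto
              have h1 : a ∈ N \ R' :=
                Finset.mem_sdiff.mpr ⟨hL2N ha, Finset.disjoint_right.mp hdis ha⟩
              have h2 : a ∉ N \ (R' ∪ L2') := by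
                simp only [Finset.mem_sdiff, Finset.mem_union]
                tauto
              have := Finset.card_lt_card
                ((Finset.ssubset_iff_of_subset hsub).mpr ⟨a, h1, h2⟩)
              omega
            · simp only [Finset.mem_union]
              push_neg
              exact ⟨hiR, hiL2⟩
            · intro a ha
              exact (Finset.mem_sdiff.mp (hH ha)).1
            · intro l hl
              exact ⟨hHD l hl, fun h => hiH (h ▸ hl)⟩
            · rw [Finset.disjoint_right]
              intro a ha hb
              have := Finset.mem_sdiff.mp (hH ha)
              simp only [Finset.mem_union, Finset.mem_singleton] at this hb
              tauto
          rw [hphi, mul_one]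
      rw [Finset.sum_congr rfl step, sum_powerset_weights]


lemma Dset_spec {V : Type*} [DecidableEq V] (N : Finset V) (s : V) (G : V → V → Prop) (i : V) :
    ∀ a ∈ Dset N s G i, a ∈ insert s N ∧ a ≠ i := by
  classical
  intro a ha
  rw [Dset, Finset.mem_filter] at ha
  exact ⟨ha.1, ha.2.1⟩

set_option maxHeartbeats 1000000 in
lemma core {V : Type*} [Fintype V] [DecidableEq V] (N : Finset V) (s : V) (G : V → V → Prop)
    (hG : ∀ a b, G a b → a ∈ insert s N ∧ b ∈ N)
    (p : V → V → ℝ) (hresp : ∀ l k, ¬ G l k → p l k = 0)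
    (i : V) (hi : i ∈ N)
    (R I L1 L2 : Finset V)
    (hR : R ⊆ (insert s N).erase i)
    (hI : I ⊆ Dset N s G i \ R)
    (hL1 : L1 ⊆ N \ (Dset N s G i ∪ R ∪ {i}))
    (hL2 : L2 ⊆ N \ (Dset N s G i ∪ R ∪ {i}))
    (hdisj : Disjoint L1 L2)
    (hIne : I ≠ ∅)
    (IH : ∀ Hg Hb L' : Finset V,
      Hg ⊆ (N \ (R ∪ I ∪ {i})) ∩ Dset N s G i →
      Hb ⊆ N \ (Dset N s G i ∪ (R ∪ I) ∪ {i}) →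
      L' ⊆ N \ (Dset N s G i ∪ (R ∪ I) ∪ {i}) →
      Disjoint L' Hb →
      phi N p {i} ((R ∪ I) ∪ L') (Hg ∪ Hb) = phi N p {i} (R ∪ I) Hg) :
    phi N p {i} (R ∪ L1) (I ∪ L2)
      = ∑ Hg ∈ ((N \ (R ∪ I ∪ {i})) ∩ Dset N s G i).powerset,
          (∏ k ∈ Hg, (1 - ∏ l ∈ I, (1 - p l k))) *
            ((∏ k ∈ ((N \ (R ∪ I ∪ {i})) ∩ Dset N s G i) \ Hg, ∏ l ∈ I, (1 - p l k)) *
              ∏ l ∈ I, (1 - p l i)) *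
            phi N p {i} (R ∪ I) Hg := by
  classical
  -- pointwise membership facts
  have hDi : i ∉ Dset N s G i := fun h => (Dset_spec N s G i i h).2 rfl
  have hRm : ∀ a ∈ R, a ∈ insert s N ∧ a ≠ i := by
    intro a ha
    have := Finset.mem_erase.mp (hR ha)
    exact ⟨this.2, this.1⟩
  have hIm : ∀ a ∈ I, a ∈ Dset N s G i ∧ a ∉ R := fun a ha => Finset.mem_sdiff.mp (hI ha)
  have hL1m : ∀ a ∈ L1, a ∈ N ∧ a ∉ Dset N s G i ∧ a ∉ R ∧ a ≠ i := by
    intro a ha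
    have := Finset.mem_sdiff.mp (hL1 ha)
    simp only [Finset.mem_union, Finset.mem_singleton] at this
    tauto
  have hL2m : ∀ a ∈ L2, a ∈ N ∧ a ∉ Dset N s G i ∧ a ∉ R ∧ a ≠ i := by
    intro a ha
    have := Finset.mem_sdiff.mp (hL2 ha)
    simp only [Finset.mem_union, Finset.mem_singleton] at this
    tauto
  have hIL2disj : Disjoint I L2 :=
    Finset.disjoint_left.mpr fun a ha hb => (hL2m a hb).2.1 (hIm a ha).1
  have hprod2 : ∀ k, (k ∈ Dset N s G i ∨ k = i) →
      ∏ l ∈ I ∪ L2, (1 - p l k) = ∏ l ∈ I, (1 - p l k) := by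
    intro k hk
    rw [Finset.prod_union hIL2disj]
    have h1 : ∏ l ∈ L2, (1 - p l k) = 1 := by
      refine Finset.prod_eq_one fun l hl => ?_
      rw [pzero N s G hG p hresp i hi l k (hL2m l hl).2.1 (hL2m l hl).2.2.2 hk]
      ring
    rw [h1, mul_one]
  have hIL2ne : I ∪ L2 ≠ ∅ := fun h => hIne (Finset.union_eq_empty.mp h).1
  set D := Dset N s G i with hD
  set Sg := (N \ (R ∪ I ∪ {i})) ∩ D with hSgdef
  set Sb := (N \ ((R ∪ L1) ∪ (I ∪ L2) ∪ {i})) \ D with hSbdef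
  have hSgm : ∀ a ∈ Sg, (a ∈ N ∧ a ∉ R ∧ a ∉ I ∧ a ≠ i) ∧ a ∈ D := by
    intro a ha
    have := Finset.mem_inter.mp ha
    have h1 := Finset.mem_sdiff.mp this.1
    simp only [Finset.mem_union, Finset.mem_singleton] at h1
    tauto
  have hSbm : ∀ a ∈ Sb, (a ∈ N ∧ a ∉ R ∧ a ∉ L1 ∧ a ∉ I ∧ a ∉ L2 ∧ a ≠ i) ∧ a ∉ D := by
    intro a ha
    have := Finset.mem_sdiff.mp ha
    have h1 := Finset.mem_sdiff.mp this.1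
    simp only [Finset.mem_union, Finset.mem_singleton] at h1
    tauto
  have hWeq : N \ ((R ∪ L1) ∪ (I ∪ L2) ∪ {i}) = Sg ∪ Sb := by
    ext a
    rw [hSgdef, hSbdef]
    simp only [Finset.mem_sdiff, Finset.mem_union, Finset.mem_inter, Finset.mem_singleton]
    constructor
    · intro ⟨haN, ha⟩
      by_cases haD : a ∈ D
      · exact Or.inl ⟨⟨haN, by tauto⟩, haD⟩
      · exact Or.inr ⟨⟨haN, ha⟩, haD⟩
    · rintro (⟨⟨haN, ha⟩, haD⟩ | ⟨⟨haN, ha⟩, haD⟩)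
      · refine ⟨haN, ?_⟩
        have h1 : a ∉ L1 := fun h => (hL1m a h).2.1 haD
        have h2 : a ∉ L2 := fun h => (hL2m a h).2.1 haD
        tauto
      · exact ⟨haN, ha⟩
  have hSgSb : Disjoint Sg Sb :=
    Finset.disjoint_left.mpr fun a ha hb => (hSbm a hb).2 (hSgm a ha).2
  rw [phi_eq _ _ _ _ _ hIL2ne, hWeq, sum_powerset_split hSgSb]
  refine Finset.sum_congr rfl ?_
  intro Hg hHg
  rw [Finset.mem_powerset] at hHg
  have key : ∀ Hb ∈ Sb.powerset,
      (∏ k ∈ Hg ∪ Hb, (1 - ∏ l ∈ I ∪ L2, (1 - p l k))) *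
        (∏ k ∈ N \ ((Hg ∪ Hb) ∪ (R ∪ L1) ∪ (I ∪ L2)), ∏ l ∈ I ∪ L2, (1 - p l k)) *
        phi N p {i} ((R ∪ L1) ∪ (I ∪ L2)) (Hg ∪ Hb)
      = ((∏ k ∈ Hg, (1 - ∏ l ∈ I, (1 - p l k))) *
          ((∏ k ∈ Sg \ Hg, ∏ l ∈ I, (1 - p l k)) * ∏ l ∈ I, (1 - p l i)) *
          phi N p {i} (R ∪ I) Hg) *
        ((∏ k ∈ Hb, (1 - ∏ l ∈ I ∪ L2, (1 - p l k))) *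
          ∏ k ∈ Sb \ Hb, ∏ l ∈ I ∪ L2, (1 - p l k)) := by
    intro Hb hHb
    rw [Finset.mem_powerset] at hHb
    have hHgHb : Disjoint Hg Hb := hSgSb.mono hHg hHb
    -- (b) phi equality via IH
    have hun : (R ∪ L1) ∪ (I ∪ L2) = (R ∪ I) ∪ (L1 ∪ L2) := by
      ext a
      simp only [Finset.mem_union]
      tauto
    have hphi : phi N p {i} ((R ∪ L1) ∪ (I ∪ L2)) (Hg ∪ Hb) = phi N p {i} (R ∪ I) Hg := by
      rw [hun]
      refine IH Hg Hb (L1 ∪ L2) hHg ?_ ?_ ?_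
      · intro a ha
        have h := hSbm a (hHb ha)
        simp only [Finset.mem_sdiff, Finset.mem_union, Finset.mem_singleton]
        push_neg
        exact ⟨h.1.1, ⟨h.2, h.1.2.1, h.1.2.2.2.1⟩, h.1.2.2.2.2.2⟩
      · intro a ha
        simp only [Finset.mem_union] at ha
        simp only [Finset.mem_sdiff, Finset.mem_union, Finset.mem_singleton]
        push_neg
        rcases ha with ha | ha
        · have h1 := hL1m a ha
          have h2 : a ∉ I := fun h => h1.2.1 (hIm a h).1
          exact ⟨h1.1, ⟨h1.2.1, h1.2.2.1, h2⟩, h1.2.2.2⟩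
        · have h1 := hL2m a ha
          have h2 : a ∉ I := fun h => h1.2.1 (hIm a h).1
          exact ⟨h1.1, ⟨h1.2.1, h1.2.2.1, h2⟩, h1.2.2.2⟩
      · refine Finset.disjoint_left.mpr fun a ha hb => ?_
        have h := (hSbm a (hHb hb)).1
        simp only [Finset.mem_union] at ha
        rcases ha with ha | ha
        · exact h.2.2.1 ha
        · exact h.2.2.2.2.1 ha
    -- (c) first product
    have hprodHgHb : ∏ k ∈ Hg ∪ Hb, (1 - ∏ l ∈ I ∪ L2, (1 - p l k))
        = (∏ k ∈ Hg, (1 - ∏ l ∈ I, (1 - p l k))) *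
          ∏ k ∈ Hb, (1 - ∏ l ∈ I ∪ L2, (1 - p l k)) := by
      rw [Finset.prod_union hHgHb]
      congr 1
      refine Finset.prod_congr rfl fun k hk => ?_
      rw [hprod2 k (Or.inl (hSgm k (hHg hk)).2)]
    -- (d) the Q-set
    have hQ : N \ ((Hg ∪ Hb) ∪ (R ∪ L1) ∪ (I ∪ L2))
        = (Sg \ Hg) ∪ ((Sb \ Hb) ∪ {i}) := by
      ext a
      have haHg : a ∈ Hg → a ∈ Sg := fun h => hHg h
      have haHb : a ∈ Hb → a ∈ Sb := fun h => hHb h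
      have hSga := hSgm a
      have hSba := hSbm a
      have hL1a := hL1m a
      have hL2a := hL2m a
      have hIa := hIm a
      simp only [Finset.mem_sdiff, Finset.mem_union, Finset.mem_singleton]
      constructor
      · rintro ⟨haN, ha⟩
        push_neg at ha
        obtain ⟨⟨⟨h1, h2⟩, ⟨h3, h4⟩⟩, h5, h6⟩ := ha
        by_cases hai : a = i
        · exact Or.inr (Or.inr hai)
        · by_cases haD : a ∈ D
          · refine Or.inl ⟨?_, h1⟩
            rw [hSgdef]
            simp only [Finset.mem_inter, Finset.mem_sdiff, Finset.mem_union,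
              Finset.mem_singleton]
            push_neg
            exact ⟨⟨haN, ⟨h3, h5⟩, hai⟩, haD⟩
          · refine Or.inr (Or.inl ⟨?_, h2⟩)
            rw [hSbdef]
            simp only [Finset.mem_sdiff, Finset.mem_union, Finset.mem_singleton]
            push_neg
            exact ⟨⟨haN, ⟨⟨h3, h4⟩, h5, h6⟩, hai⟩, haD⟩
      · rintro (⟨ha, hHg'⟩ | ⟨ha, hHb'⟩ | hai)
        · have h := hSga ha
          have hnL1 : a ∉ L1 := fun hh => (hL1a hh).2.1 h.2
          have hnL2 : a ∉ L2 := fun hh => (hL2a hh).2.1 h.2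
          have hnHb : a ∉ Hb := fun hh => (hSba (haHb hh)).2 h.2
          refine ⟨h.1.1, ?_⟩
          push_neg
          exact ⟨⟨⟨hHg', hnHb⟩, h.1.2.1, hnL1⟩, h.1.2.2.1, hnL2⟩
        · have h := hSba ha
          have hnHg : a ∉ Hg := fun hh => h.2 (hSga (haHg hh)).2
          refine ⟨h.1.1, ?_⟩
          push_neg
          exact ⟨⟨⟨hnHg, hHb'⟩, h.1.2.1, h.1.2.2.1⟩, h.1.2.2.2.1, h.1.2.2.2.2.1⟩
        · have hnHg : a ∉ Hg := fun hh => (hSga (haHg hh)).1.2.2.2 hai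
          have hnHb : a ∉ Hb := fun hh => (hSba (haHb hh)).1.2.2.2.2.2 hai
          have hnR : a ∉ R := fun hh => (hRm a hh).2 hai
          have hnL1 : a ∉ L1 := fun hh => (hL1a hh).2.2.2 hai
          have hnL2 : a ∉ L2 := fun hh => (hL2a hh).2.2.2 hai
          have hnI : a ∉ I := fun hh => hDi (hai ▸ (hIa hh).1)
          refine ⟨by rw [hai]; exact hi, ?_⟩
          push_neg
          exact ⟨⟨⟨hnHg, hnHb⟩, hnR, hnL1⟩, hnI, hnL2⟩
    have hd1 : Disjoint (Sg \ Hg) ((Sb \ Hb) ∪ {i}) := by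
      refine Finset.disjoint_left.mpr fun a ha hb => ?_
      have h := hSgm a (Finset.mem_sdiff.mp ha).1
      simp only [Finset.mem_union, Finset.mem_singleton, Finset.mem_sdiff] at hb
      rcases hb with ⟨hb, -⟩ | rfl
      · exact (hSbm a hb).2 h.2
      · exact h.1.2.2.2 rfl
    have hd2 : Disjoint (Sb \ Hb) ({i} : Finset V) := by
      refine Finset.disjoint_left.mpr fun a ha hb => ?_
      rw [Finset.mem_singleton] at hb
      subst hb
      exact (hSbm a (Finset.mem_sdiff.mp ha).1).1.2.2.2.2.2 rfl
    have hprodQ : ∏ k ∈ N \ ((Hg ∪ Hb) ∪ (R ∪ L1) ∪ (I ∪ L2)), ∏ l ∈ I ∪ L2, (1 - p l k)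
        = (∏ k ∈ Sg \ Hg, ∏ l ∈ I, (1 - p l k)) *
          ((∏ k ∈ Sb \ Hb, ∏ l ∈ I ∪ L2, (1 - p l k)) * ∏ l ∈ I, (1 - p l i)) := by
      rw [hQ, Finset.prod_union hd1, Finset.prod_union hd2, Finset.prod_singleton]
      congr 1
      · refine Finset.prod_congr rfl fun k hk => ?_
        exact hprod2 k (Or.inl (hSgm k (Finset.mem_sdiff.mp hk).1).2)
      · congr 1
        exact hprod2 i (Or.inr rfl)
    rw [hphi, hprodHgHb, hprodQ]
    ring
  rw [Finset.sum_congr rfl key, ← Finset.mul_sum,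
    sum_powerset_weights Sb fun k => ∏ l ∈ I ∪ L2, (1 - p l k), mul_one]




set_option maxHeartbeats 1000000 in
/-- **Irrelevance of unreachable nodes.**  If `R ⊆ (N ∪ {s}) \ {i}`, `I ⊆ D_i \ R` and
`L₁, L₂` are disjoint subsets of `N \ (D_i ∪ R ∪ {i})`, then
`φ[R ∪ L₁, I ∪ L₂ | p, {i}] = φ[R, I | p, {i}]`. -/
theorem unreachable_nodes_irrelevant
    {V : Type*} [Fintype V] [DecidableEq V]
    (N : Finset V) (s : V) (hs : s ∉ N)
    (G : V → V → Prop)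
    (hG : ∀ a b, G a b → a ∈ insert s N ∧ b ∈ N)
    (p : V → V → ℝ)
    (hp : ∀ l ∈ insert s N, ∀ k ∈ N, 0 ≤ p l k ∧ p l k ≤ 1)
    (hresp : ∀ l k, ¬ G l k → p l k = 0)
    (i : V) (hi : i ∈ N)
    (R I L1 L2 : Finset V)
    (hR : R ⊆ (insert s N).erase i)
    (hI : I ⊆ Dset N s G i \ R)
    (hL1 : L1 ⊆ N \ (Dset N s G i ∪ R ∪ {i}))
    (hL2 : L2 ⊆ N \ (Dset N s G i ∪ R ∪ {i}))
    (hdisj : Disjoint L1 L2) :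
    phi N p {i} (R ∪ L1) (I ∪ L2) = phi N p {i} R I := by
  classical
  suffices Hmain : ∀ n (R I L1 L2 : Finset V),
      (Finset.univ \ (R ∪ I)).card * 2 + I.card ≤ n →
      R ⊆ (insert s N).erase i → I ⊆ Dset N s G i \ R →
      L1 ⊆ N \ (Dset N s G i ∪ R ∪ {i}) → L2 ⊆ N \ (Dset N s G i ∪ R ∪ {i}) →
      Disjoint L1 L2 →
      phi N p {i} (R ∪ L1) (I ∪ L2) = phi N p {i} R I by
    exact Hmain _ R I L1 L2 le_rfl hR hI hL1 hL2 hdisj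
  clear hR hI hL1 hL2 hdisj R I L1 L2
  intro n
  induction n using Nat.strong_induction_on with
  | _ n ih =>
  intro R I L1 L2 hn hR hI hL1 hL2 hdisj
  have hL2m : ∀ a ∈ L2, a ∈ N ∧ a ∉ Dset N s G i ∧ a ∉ R ∧ a ≠ i := by
    intro a ha
    have := Finset.mem_sdiff.mp (hL2 ha)
    simp only [Finset.mem_union, Finset.mem_singleton] at this
    tauto
  have hL1m : ∀ a ∈ L1, a ∈ N ∧ a ∉ Dset N s G i ∧ a ∉ R ∧ a ≠ i := by
    intro a ha
    have := Finset.mem_sdiff.mp (hL1 ha)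
    simp only [Finset.mem_union, Finset.mem_singleton] at this
    tauto
  rcases eq_or_ne I ∅ with rfl | hIne
  · rw [Finset.empty_union, phi_empty]
    refine phi_one N s G hG p hresp i hi (N \ (R ∪ L1)).card (R ∪ L1) L2 le_rfl ?_ ?_ ?_ ?_
    · rw [Finset.mem_union]
      rintro (h | h)
      · exact (Finset.mem_erase.mp (hR h)).1 rfl
      · exact (hL1m i h).2.2.2 rfl
    · exact fun a ha => (hL2m a ha).1
    · exact fun l hl => ⟨(hL2m l hl).2.1, (hL2m l hl).2.2.2⟩
    · refine Finset.disjoint_left.mpr fun a ha hb => ?_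
      rw [Finset.mem_union] at ha
      rcases ha with ha | ha
      · exact (hL2m a hb).2.2.1 ha
      · exact Finset.disjoint_left.mp hdisj ha hb
  · have IH : ∀ Hg Hb L' : Finset V,
        Hg ⊆ (N \ (R ∪ I ∪ {i})) ∩ Dset N s G i →
        Hb ⊆ N \ (Dset N s G i ∪ (R ∪ I) ∪ {i}) →
        L' ⊆ N \ (Dset N s G i ∪ (R ∪ I) ∪ {i}) →
        Disjoint L' Hb →
        phi N p {i} ((R ∪ I) ∪ L') (Hg ∪ Hb) = phi N p {i} (R ∪ I) Hg := by
      intro Hg Hb L' h1 h2 h3 h4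
      have hHgsub : Hg ⊆ Finset.univ \ (R ∪ I) := by
        intro a ha
        have hmm := Finset.mem_inter.mp (h1 ha)
        have h5 := Finset.mem_sdiff.mp hmm.1
        simp only [Finset.mem_union, Finset.mem_singleton] at h5
        rw [Finset.mem_sdiff, Finset.mem_union]
        exact ⟨Finset.mem_univ a, by tauto⟩
      have hmu : (Finset.univ \ ((R ∪ I) ∪ Hg)).card * 2 + Hg.card < n := by
        have e1 : Finset.univ \ ((R ∪ I) ∪ Hg) = (Finset.univ \ (R ∪ I)) \ Hg := by
          ext a
          simp only [Finset.mem_sdiff, Finset.mem_union, Finset.mem_univ, true_and]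
          tauto
        have e2 : ((Finset.univ \ (R ∪ I)) \ Hg).card = (Finset.univ \ (R ∪ I)).card - Hg.card := by
          rw [Finset.card_sdiff, Finset.inter_eq_left.mpr hHgsub]
        have e3 := Finset.card_le_card hHgsub
        have e4 : 0 < I.card := Finset.card_pos.mpr (Finset.nonempty_iff_ne_empty.mpr hIne)
        rw [e1, e2]
        omega
      have hR' : R ∪ I ⊆ (insert s N).erase i := by
        rw [Finset.union_subset_iff]
        refine ⟨hR, fun a ha => ?_⟩
        have := Dset_spec N s G i a (Finset.mem_sdiff.mp (hI ha)).1
        exact Finset.mem_erase.mpr ⟨this.2, this.1⟩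
      have hI' : Hg ⊆ Dset N s G i \ (R ∪ I) := by
        intro a ha
        have hmm := Finset.mem_inter.mp (h1 ha)
        have h5 := Finset.mem_sdiff.mp hmm.1
        simp only [Finset.mem_union, Finset.mem_singleton] at h5
        rw [Finset.mem_sdiff, Finset.mem_union]
        exact ⟨hmm.2, by tauto⟩
      exact ih _ hmu (R ∪ I) Hg L' Hb le_rfl hR' hI' h3 h2 h4
    calc phi N p {i} (R ∪ L1) (I ∪ L2)
        = ∑ Hg ∈ ((N \ (R ∪ I ∪ {i})) ∩ Dset N s G i).powerset,
            (∏ k ∈ Hg, (1 - ∏ l ∈ I, (1 - p l k))) *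
              ((∏ k ∈ ((N \ (R ∪ I ∪ {i})) ∩ Dset N s G i) \ Hg, ∏ l ∈ I, (1 - p l k)) *
                ∏ l ∈ I, (1 - p l i)) *
              phi N p {i} (R ∪ I) Hg :=
          core N s G hG p hresp i hi R I L1 L2 hR hI hL1 hL2 hdisj hIne IH
      _ = phi N p {i} (R ∪ ∅) (I ∪ ∅) :=
          (core N s G hG p hresp i hi R I ∅ ∅ hR hI (Finset.empty_subset _)
            (Finset.empty_subset _) (Finset.disjoint_left.mpr (by simp)) hIne IH).symm
      _ = phi N p {i} R I := by rw [Finset.union_empty, Finset.union_empty]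
end

section
/- Punishments expire after τ conformity stages (Corollary of corr-0): For every history h, every integer r ≥ τ, and all nodes i ∈ N and j ∈ N, if h_r denotes the history obtained from h by appending r copies of the all-cooperate signal, then DS_i[j|h_r] = ∅. -/
/-- The all-cooperate public signal: no pair is marked as a defection
(a signal value `true` means *defect*, `false` means *cooperate*). -/
def allCoop {ν : Type*} : ν → ν → Bool := fun _ _ => false

/-- The defection set `DS_i[j|h]` recording, for the pair of nodes `(i, j)`, the
defections they are both expected to react to, together with their age.  Histories are
lists of public signals, most recent signal first.  An element `(k₁, k₂, r)` means
that `i` and `j` both react to a defection of `k₁` from `k₂` that occurred in the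
previous `r`-th stage. -/
def DS {ν : Type*} (τ : ℤ) (RS : ν → ν → Set ν) (i j : ν) :
    List (ν → ν → Bool) → Set (ν × ν × ℤ)
  | [] => ∅
  | s :: h =>
      {x | (x.1, x.2.1, x.2.2 - 1) ∈ DS τ RS i j h ∧ x.2.2 < τ}
        ∪ {x | x.2.2 = 0 ∧ i ∈ RS x.1 x.2.1 ∧ j ∈ RS x.1 x.2.1 ∧ s x.1 x.2.1 = true}


lemma DS_nonneg {ν : Type*} (τ : ℤ) (RS : ν → ν → Set ν) (i j : ν) :
    ∀ (h : List (ν → ν → Bool)) (x : ν × ν × ℤ), x ∈ DS τ RS i j h → 0 ≤ x.2.2 := by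
  intro h
  induction h with
  | nil => intro x hx; exact absurd hx (by simp [DS])
  | cons s h ih =>
    intro x hx
    rcases hx with ⟨hmem, _⟩ | ⟨h0, _⟩
    · have h' : (0:ℤ) ≤ x.2.2 - 1 := ih _ hmem
      omega
    · omega

lemma DS_replicate_shift {ν : Type*} (τ : ℤ) (RS : ν → ν → Set ν) (i j : ν)
    (h : List (ν → ν → Bool)) :
    ∀ (n : ℕ) (x : ν × ν × ℤ), x ∈ DS τ RS i j (List.replicate n allCoop ++ h) →
      (x.1, x.2.1, x.2.2 - n) ∈ DS τ RS i j h := by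
  intro n
  induction n with
  | zero => intro x hx; simpa using hx
  | succ n ih =>
    intro x hx
    rw [List.replicate_succ, List.cons_append] at hx
    rcases hx with ⟨hmem, _⟩ | ⟨_, _, _, hbad⟩
    · have := ih _ hmem
      have heq : x.2.2 - 1 - (n : ℤ) = x.2.2 - ((n : ℕ) + 1 : ℕ) := by push_cast; ring
      rwa [heq] at this
    · simp [allCoop] at hbad

/-- **Punishments expire after `τ` conformity stages (Corollary of corr-0).**
After appending `r ≥ τ` copies of the all-cooperate signal to any history `h`, the
defection set `DS_i[j|·]` is empty. -/
theorem DS_expires_after_conformity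
    {ν : Type*} (τ : ℕ) (hτ : 1 ≤ τ) (RS : ν → ν → Set ν)
    (h : List (ν → ν → Bool)) (i j : ν)
    (r : ℕ) (hr : τ ≤ r) :
    DS (τ : ℤ) RS i j (List.replicate r allCoop ++ h) = ∅ := by
  ext x
  simp only [Set.mem_empty_iff_false, iff_false]
  intro hx
  obtain ⟨r', rfl⟩ : ∃ r', r = r' + 1 := ⟨r - 1, by omega⟩
  rw [List.replicate_succ, List.cons_append] at hx
  rcases hx with ⟨hmem, hlt⟩ | ⟨_, _, _, hbad⟩
  · have h1 := DS_replicate_shift (τ : ℤ) RS i j h r' _ hmem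
    have h2 : (0:ℤ) ≤ x.2.2 - 1 - r' := DS_nonneg (τ : ℤ) RS i j h _ h1
    omega
  · simp [allCoop] at hbad
end

section
/- Expiry after a one-shot deviation (Lemma corr-2): Let s_0 be any public signal. For any history h and any integer r > τ, let h'_r be the history obtained from h by appending s_0 followed by r−1 copies of the all-cooperate signal, and let h*_r be the history obtained from h by appending r copies of the all-cooperate signal. Then for all nodes i, j ∈ N: DS_i[j|h'_r] = DS_i[j|h*_r] = ∅. -/
lemma DS_shift {ν : Type*} (τ : ℤ) (RS : ν → ν → Set ν) (i j : ν) :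
    ∀ (n : ℕ) (t : List (ν → ν → Bool)) (x : ν × ν × ℤ),
      x ∈ DS τ RS i j (List.replicate n allCoop ++ t) →
        (x.1, x.2.1, x.2.2 - n) ∈ DS τ RS i j t ∧ (1 ≤ n → x.2.2 < τ) := by
  intro n
  induction n with
  | zero => intro t x hx; simpa using hx
  | succ n ih =>
      intro t x hx
      rw [List.replicate_succ, List.cons_append] at hx
      rcases hx with ⟨h1, hlt⟩ | ⟨_, _, _, hsig⟩
      · obtain ⟨hmem, _⟩ := ih t _ h1
        refine ⟨?_, fun _ => hlt⟩
        simp only at hmem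
        have : x.2.2 - 1 - (n : ℤ) = x.2.2 - ((n : ℕ) + 1 : ℕ) := by push_cast; ring
        rwa [this] at hmem
      · simp [allCoop] at hsig

/-- **Expiry after a one-shot deviation (Lemma corr-2).**  Let `s₀` be any public
signal.  For `r > τ`, appending to a history `h` the signal `s₀` followed by `r − 1`
all-cooperate signals, or appending `r` all-cooperate signals, both yield an empty
defection set: `DS_i[j|h'_r] = DS_i[j|h*_r] = ∅`. -/
theorem DS_one_shot_deviation_expires
    {ν : Type*} (τ : ℕ) (hτ : 1 ≤ τ) (RS : ν → ν → Set ν)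
    (s0 : ν → ν → Bool) (h : List (ν → ν → Bool)) (i j : ν)
    (r : ℕ) (hr : τ < r) :
    DS (τ : ℤ) RS i j (List.replicate (r - 1) allCoop ++ s0 :: h) = ∅ ∧
      DS (τ : ℤ) RS i j (List.replicate r allCoop ++ h) = ∅ := by
  constructor
  · ext x
    simp only [Set.mem_empty_iff_false, iff_false]
    intro hx
    obtain ⟨hmem, hlt⟩ := DS_shift _ _ _ _ _ _ _ hx
    have h0 := DS_nonneg _ _ _ _ _ _ hmem
    simp only at h0
    have hlt' := hlt (by omega)
    have : ((r - 1 : ℕ) : ℤ) = (r : ℤ) - 1 := by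
      have : 1 ≤ r := by omega
      push_cast [Nat.cast_sub this]; ring
    omega
  · ext x
    simp only [Set.mem_empty_iff_false, iff_false]
    intro hx
    obtain ⟨hmem, hlt⟩ := DS_shift _ _ _ _ _ _ _ hx
    have h0 := DS_nonneg _ _ _ _ _ _ hmem
    simp only at h0
    have hlt' := hlt (by omega)
    omega
end

section
/- Delayed discount-factor characterization (core of Lemma priv-suff): Let m ≥ 0 and τ ≥ 1 be integers and let a, u be real numbers with a > 0. There exists ω ∈ (0,1) such that u · ∑_{r=m+1}^{m+τ} ω^r ≥ a · ∑_{r=0}^{m} ω^r if and only if u·τ > a·(m+1). -/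
/-- **Delayed discount-factor characterization** (core of Lemma priv-suff).  For
integers `m ≥ 0` and `τ ≥ 1` and reals `a > 0` and `u`, there exists a discount
factor `ω ∈ (0,1)` with `u · ∑_{r=m+1}^{m+τ} ω^r ≥ a · ∑_{r=0}^{m} ω^r` if and only
if `u·τ > a·(m+1)`. -/
theorem delayed_discount_factor_characterization
    (m τ : ℕ) (hτ : 1 ≤ τ) (a u : ℝ) (ha : 0 < a) :
    (∃ ω ∈ Set.Ioo (0 : ℝ) 1,
        a * ∑ r ∈ Finset.Icc 0 m, ω ^ r ≤
          u * ∑ r ∈ Finset.Icc (m + 1) (m + τ), ω ^ r) ↔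
      a * (m + 1) < u * τ := by
  constructor
  · rintro ⟨ω, ⟨hω0, hω1⟩, h⟩
    have hs0 : (0:ℝ) < ∑ r ∈ Finset.Icc 0 m, ω ^ r := by
      apply Finset.sum_pos
      · intro i _; positivity
      · exact ⟨0, by simp⟩
    have hu : 0 < u := by
      by_contra hu
      push_neg at hu
      have h2 : u * ∑ r ∈ Finset.Icc (m+1) (m+τ), ω ^ r ≤ 0 :=
        mul_nonpos_of_nonpos_of_nonneg hu (Finset.sum_nonneg fun i _ => by positivity)
      nlinarith [mul_pos ha hs0]
    have hb : ∑ r ∈ Finset.Icc (m+1) (m+τ), ω ^ r ≤ (τ : ℝ) * ω ^ (m+1) := by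
      calc ∑ r ∈ Finset.Icc (m+1) (m+τ), ω ^ r
          ≤ ∑ r ∈ Finset.Icc (m+1) (m+τ), ω ^ (m+1) := by
            apply Finset.sum_le_sum
            intro i hi
            exact pow_le_pow_of_le_one hω0.le hω1.le (Finset.mem_Icc.mp hi).1
        _ = (τ : ℝ) * ω ^ (m+1) := by
            rw [Finset.sum_const, Nat.card_Icc, nsmul_eq_mul]
            congr 1
            push_cast [show m + τ + 1 - (m + 1) = τ by omega]
            ring
    have hc : ((m : ℝ) + 1) * ω ^ m ≤ ∑ r ∈ Finset.Icc 0 m, ω ^ r := by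
      calc ((m : ℝ) + 1) * ω ^ m
          = ∑ r ∈ Finset.Icc 0 m, ω ^ m := by
            rw [Finset.sum_const, Nat.card_Icc, nsmul_eq_mul]
            push_cast [Nat.sub_zero]
            ring
        _ ≤ ∑ r ∈ Finset.Icc 0 m, ω ^ r := by
            apply Finset.sum_le_sum
            intro i hi
            exact pow_le_pow_of_le_one hω0.le hω1.le (Finset.mem_Icc.mp hi).2
    have hpow : ω ^ (m+1) < ω ^ m := by
      have := pow_pos hω0 m
      calc ω ^ (m+1) = ω ^ m * ω := by ring
        _ < ω ^ m * 1 := by nlinarith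
        _ = ω ^ m := by ring
    have key : a * (((m:ℝ)+1) * ω ^ (m+1)) < u * ((τ:ℝ) * ω ^ (m+1)) := by
      have h1 : a * (((m:ℝ)+1) * ω ^ (m+1)) < a * (((m:ℝ)+1) * ω ^ m) := by
        apply mul_lt_mul_of_pos_left _ ha
        apply mul_lt_mul_of_pos_left hpow
        positivity
      have h2 : a * (((m:ℝ)+1) * ω ^ m) ≤ a * ∑ r ∈ Finset.Icc 0 m, ω ^ r :=
        mul_le_mul_of_nonneg_left hc ha.le
      have h3 : u * ∑ r ∈ Finset.Icc (m+1) (m+τ), ω ^ r ≤ u * ((τ:ℝ) * ω ^ (m+1)) :=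
        mul_le_mul_of_nonneg_left hb hu.le
      linarith
    have hp : (0:ℝ) < ω ^ (m+1) := pow_pos hω0 _
    nlinarith [key]
  · intro hlt
    set F : ℝ → ℝ := fun ω =>
      u * ∑ r ∈ Finset.Icc (m+1) (m+τ), ω ^ r - a * ∑ r ∈ Finset.Icc 0 m, ω ^ r with hF
    have hFcont : Continuous F := by
      apply Continuous.sub <;> exact Continuous.mul continuous_const
        (continuous_finset_sum _ fun i _ => continuous_pow i)
    have hF1 : F 1 = u * τ - a * (m + 1) := by
      simp [hF, Nat.card_Icc, show m + τ + 1 - (m + 1) = τ by omega]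
    have hF1pos : 0 < F 1 := by rw [hF1]; linarith
    have := Metric.continuousAt_iff.mp (hFcont.continuousAt (x := 1)) (F 1) hF1pos
    obtain ⟨δ, hδ, hδ'⟩ := this
    set ω : ℝ := max (1/2) (1 - δ/2) with hωdef
    have hω0 : (0:ℝ) < ω := lt_max_of_lt_left (by norm_num)
    have hω1 : ω < 1 := by
      apply max_lt (by norm_num)
      linarith
    have hdist : dist ω 1 < δ := by
      rw [Real.dist_eq, abs_of_nonpos (by linarith)]
      have : 1 - δ/2 ≤ ω := le_max_right _ _
      linarith
    have := hδ' hdist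
    rw [Real.dist_eq] at this
    have hFω : 0 < F ω := by
      have := abs_lt.mp this
      linarith
    refine ⟨ω, ⟨hω0, hω1⟩, ?_⟩
    simp only [hF] at hFω
    linarith
end

section
/- Necessary benefit-to-cost ratio for direct reciprocity (quantitative content of Lemma nec-btc): Let τ ≥ 1 be an integer, γ > 0, β real, p ∈ (0,1], p̄ ≥ 0 with β > γ·p̄, q* ∈ [0,1), and q' ∈ [0,1]. If there exists ω ∈ (0,1) such that −(1−q*)·γ·p + ∑_{r=1}^{τ} ω^r · ((q'−q*)·(β−γ·p̄) − (1−q')·γ·p) ≥ 0, then q' > q* and β/γ > p̄ + (p/(q'−q*)) · (1−q' + (1−q*)/τ). -/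
/-- **Necessary benefit-to-cost ratio for direct reciprocity** (quantitative content
of Lemma nec-btc).  If the drop-condition for dropping a single neighbor holds for
some discount factor `ω ∈ (0,1)`, then `q' > q*` and
`β/γ > p̄ + (p/(q'−q*)) · (1−q' + (1−q*)/τ)`. -/
theorem direct_reciprocity_necessary_ratio
    (τ : ℕ) (hτ : 1 ≤ τ) (γ β : ℝ) (hγ : 0 < γ)
    (p : ℝ) (hp0 : 0 < p) (hp1 : p ≤ 1)
    (pbar : ℝ) (hpbar : 0 ≤ pbar) (hβ : γ * pbar < β)
    (qstar : ℝ) (hq0 : 0 ≤ qstar) (hq1 : qstar < 1)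
    (q' : ℝ) (hq'0 : 0 ≤ q') (hq'1 : q' ≤ 1)
    (hdrop : ∃ ω ∈ Set.Ioo (0 : ℝ) 1,
      0 ≤ -(1 - qstar) * γ * p +
        ∑ r ∈ Finset.Icc 1 τ,
          ω ^ r * ((q' - qstar) * (β - γ * pbar) - (1 - q') * γ * p)) :
    qstar < q' ∧
      pbar + p / (q' - qstar) * (1 - q' + (1 - qstar) / τ) < β / γ := by
  obtain ⟨ω, ⟨hω0, hω1⟩, hd⟩ := hdrop
  set A := (q' - qstar) * (β - γ * pbar) - (1 - q') * γ * p with hAdef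
  rw [← Finset.sum_mul] at hd
  set S := ∑ r ∈ Finset.Icc 1 τ, ω ^ r with hS
  have hne : (Finset.Icc 1 τ).Nonempty := ⟨1, by simp [hτ]⟩
  have hS0 : 0 < S := Finset.sum_pos (fun i _ => pow_pos hω0 i) hne
  have hSlt : S < τ := by
    have : S < ∑ r ∈ Finset.Icc 1 τ, (1 : ℝ) := by
      refine Finset.sum_lt_sum_of_nonempty hne (fun i hi => ?_)
      have hi1 : 1 ≤ i := (Finset.mem_Icc.mp hi).1
      exact pow_lt_one₀ hω0.le hω1 (by omega)
    simpa using this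
  have hβγ : 0 < β - γ * pbar := by linarith
  have hpos : 0 < (1 - qstar) * γ * p := mul_pos (mul_pos (by linarith) hγ) hp0
  have hA : 0 < A := by
    by_contra h
    push_neg at h
    nlinarith [mul_nonneg hS0.le (neg_nonneg.2 h)]
  have hqq : qstar < q' := by
    by_contra h
    push_neg at h
    nlinarith [mul_nonneg (sub_nonneg.2 h) hβγ.le, mul_pos hγ hp0]
  have hd0 : 0 < q' - qstar := sub_pos.2 hqq
  have hτ0 : (0 : ℝ) < (τ : ℝ) := by exact_mod_cast hτ
  have hτA : (1 - qstar) * γ * p + (τ : ℝ) * ((1 - q') * γ * p)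
      < (τ : ℝ) * ((q' - qstar) * (β - γ * pbar)) := by
    nlinarith [mul_lt_mul_of_pos_right hSlt hA]
  refine ⟨hqq, ?_⟩
  rw [lt_div_iff₀ hγ]
  have hexp : p / (q' - qstar) * (1 - q' + (1 - qstar) / τ)
      = p * ((τ : ℝ) * (1 - q') + (1 - qstar)) / ((q' - qstar) * τ) := by
    field_simp
    try ring
    try tauto
  rw [hexp]
  have hdt : 0 < (q' - qstar) * (τ : ℝ) := by positivity
  rw [add_mul, div_mul_eq_mul_div, ← lt_sub_iff_add_lt', div_lt_iff₀ hdt]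
  nlinarith [hτA, mul_pos hγ hp0]
end

section
/- Sufficient benefit-to-cost ratio for full indirect reciprocity (quantitative core of Theorem indir-suff): Let τ ≥ 1 be an integer, γ > 0, β real, c ≥ 1, q_0, q_1 ∈ [0,1] with 1−q_0 ≤ c·(1−q_1), and p̄_0, p̄_1, P real with 0 ≤ p̄_0 ≤ P and 0 ≤ p̄_1 ≤ P. If β/γ > P·(1 + c/τ), then there exists ω ∈ (0,1) such that −(1−q_0)·γ·p̄_0 + (1−q_1)·(β − γ·p̄_1) · ∑_{r=1}^{τ} ω^r ≥ 0. -/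
/-- **Sufficient benefit-to-cost ratio for full indirect reciprocity** (quantitative
core of Theorem indir-suff).  If `β/γ > P·(1 + c/τ)`, then there is a discount
factor `ω ∈ (0,1)` for which the drop-condition
`−(1−q₀)·γ·p̄₀ + (1−q₁)·(β − γ·p̄₁) · ∑_{r=1}^{τ} ω^r ≥ 0` holds. -/
theorem full_indirect_reciprocity_sufficient_ratio
    (τ : ℕ) (hτ : 1 ≤ τ) (γ β : ℝ) (hγ : 0 < γ)
    (c : ℝ) (hc : 1 ≤ c)
    (q0 q1 : ℝ) (hq00 : 0 ≤ q0) (hq01 : q0 ≤ 1) (hq10 : 0 ≤ q1) (hq11 : q1 ≤ 1)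
    (hcq : 1 - q0 ≤ c * (1 - q1))
    (p0 p1 P : ℝ) (hp00 : 0 ≤ p0) (hp0P : p0 ≤ P) (hp10 : 0 ≤ p1) (hp1P : p1 ≤ P)
    (hratio : P * (1 + c / τ) < β / γ) :
    ∃ ω ∈ Set.Ioo (0 : ℝ) 1,
      0 ≤ -(1 - q0) * γ * p0 +
        (1 - q1) * (β - γ * p1) * ∑ r ∈ Finset.Icc 1 τ, ω ^ r := by
  have hτr : (1 : ℝ) ≤ (τ : ℝ) := by exact_mod_cast hτ
  have hτpos : (0 : ℝ) < (τ : ℝ) := by linarith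
  have hP0 : 0 ≤ P := le_trans hp00 hp0P
  -- β > γ * P * (1 + c/τ)
  have hβ : P * (1 + c / τ) * γ < β := (lt_div_iff₀ hγ).mp hratio
  have hcτ : 0 < c / (τ : ℝ) := div_pos (by linarith) hτpos
  have hβP : γ * P < β := by
    nlinarith [mul_nonneg (mul_nonneg hP0 hcτ.le) hγ.le]
  -- case q1 = 1
  rcases le_or_gt (1 - q1) 0 with hq1' | hq1'
  · have hq1e : q1 = 1 := by linarith
    have hq0e : q0 = 1 := by nlinarith
    exact ⟨1/2, ⟨by norm_num, by norm_num⟩, by simp [hq0e, hq1e]⟩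
  · set A : ℝ := (1 - q0) * γ * p0 with hA
    set B : ℝ := (1 - q1) * (β - γ * p1) with hB
    have hBpos : 0 < B := by
      apply mul_pos hq1'
      nlinarith
    have hAnn : 0 ≤ A := by
      apply mul_nonneg (mul_nonneg (by linarith) hγ.le) hp00
    -- key strict inequality A < B * τ
    have hkey : A < B * τ := by
      have h1 : A ≤ c * (1 - q1) * (γ * p0) := by
        rw [hA]
        have hgp : 0 ≤ γ * p0 := mul_nonneg hγ.le hp00
        calc (1 - q0) * γ * p0 = (1 - q0) * (γ * p0) := by ring
          _ ≤ (c * (1 - q1)) * (γ * p0) := mul_le_mul_of_nonneg_right hcq hgp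
          _ = c * (1 - q1) * (γ * p0) := by ring
      have h1' : c * (1 - q1) * (γ * p0) ≤ c * (1 - q1) * (γ * P) := by
        have hcn : 0 ≤ c * (1 - q1) := mul_nonneg (by linarith) hq1'.le
        have : γ * p0 ≤ γ * P := mul_le_mul_of_nonneg_left hp0P hγ.le
        exact mul_le_mul_of_nonneg_left this hcn
      have h3 : γ * P * (τ + c) < β * τ := by
        have hτne : ((τ:ℝ)) ≠ 0 := ne_of_gt hτpos
        have e : γ * P * (τ + c) = P * (1 + c / τ) * γ * τ := by
          field_simp
        rw [e]
        exact mul_lt_mul_of_pos_right hβ hτpos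
      have h4 : c * (γ * P) < (β - γ * p1) * τ := by
        have hp1P' : γ * p1 ≤ γ * P := mul_le_mul_of_nonneg_left hp1P hγ.le
        nlinarith [mul_le_mul_of_nonneg_right hp1P' hτpos.le]
      have h2 : c * (1 - q1) * (γ * P) < B * τ := by
        calc c * (1 - q1) * (γ * P) = (1 - q1) * (c * (γ * P)) := by ring
          _ < (1 - q1) * ((β - γ * p1) * τ) := mul_lt_mul_of_pos_left h4 hq1'
          _ = B * τ := by rw [hB]; ring
      linarith
    set t : ℝ := A / (B * τ) with ht
    have hBτpos : 0 < B * τ := mul_pos hBpos hτpos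
    have ht0 : 0 ≤ t := div_nonneg hAnn hBτpos.le
    have ht1 : t < 1 := (div_lt_one hBτpos).mpr hkey
    have htA : t * (B * τ) = A := div_mul_cancel₀ A (ne_of_gt hBτpos)
    set ω : ℝ := max (1/2) (t ^ ((τ : ℝ)⁻¹)) with hω
    have hω0 : 0 < ω := lt_of_lt_of_le (by norm_num) (le_max_left _ _)
    have hω1 : ω < 1 := by
      apply max_lt (by norm_num)
      exact Real.rpow_lt_one ht0 ht1 (by positivity)
    refine ⟨ω, ⟨hω0, hω1⟩, ?_⟩
    have hωτ : t ≤ ω ^ τ := by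
      have h5 : (t ^ ((τ : ℝ)⁻¹)) ^ τ = t := by
        rw [← Real.rpow_natCast (t ^ ((τ : ℝ)⁻¹)) τ, ← Real.rpow_mul ht0,
          inv_mul_cancel₀ (ne_of_gt hτpos), Real.rpow_one]
      calc t = (t ^ ((τ : ℝ)⁻¹)) ^ τ := h5.symm
        _ ≤ ω ^ τ := pow_le_pow_left₀ (Real.rpow_nonneg ht0 _) (le_max_right _ _) τ
    have hSum : (τ : ℝ) * ω ^ τ ≤ ∑ r ∈ Finset.Icc 1 τ, ω ^ r := by
      have : ∀ r ∈ Finset.Icc 1 τ, ω ^ τ ≤ ω ^ r := by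
        intro r hr
        exact pow_le_pow_of_le_one hω0.le hω1.le (Finset.mem_Icc.mp hr).2
      calc (τ : ℝ) * ω ^ τ = ∑ _r ∈ Finset.Icc 1 τ, ω ^ τ := by
            rw [Finset.sum_const, Nat.card_Icc]; simp [nsmul_eq_mul]
        _ ≤ ∑ r ∈ Finset.Icc 1 τ, ω ^ r := Finset.sum_le_sum this
    have hfinal : A ≤ B * ∑ r ∈ Finset.Icc 1 τ, ω ^ r := by
      calc A = t * (B * τ) := htA.symm
        _ ≤ (ω ^ τ) * (B * τ) := by
            apply mul_le_mul_of_nonneg_right hωτ hBτpos.le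
        _ = B * ((τ : ℝ) * ω ^ τ) := by ring
        _ ≤ B * ∑ r ∈ Finset.Icc 1 τ, ω ^ r :=
            mul_le_mul_of_nonneg_left hSum hBpos.le
    rw [hA] at hfinal
    linarith
end
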